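/- Let X = ℝ with m the Lebesgue measure. For k ∈ ℕ let Γ_k = { m restricted to [0,r] : r ∈ [2^{-k},1] } and Γ = ∪_k Γ_k = { m restricted to [0,r] : r ∈ (0,1] }. Then each Γ_k is τ_b-compact, AM(Γ) ≤ lim_{k→∞} M_1(Γ_k) ≤ 1, but M_1(Γ) = ∞. In particular AM(Γ) < M_1(Γ), and Γ is an F_σ set that is not M_1-capacitable (i.e., M_1(Γ) > sup{ M_1(K) : K ⊆ Γ, K τ_b-compact }). -/

import Mathlib

open MeasureTheory Filter Topology BoundedContinuousFunction ENNReal NNReal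

noncomputable section

namespace AMPaper

variable (X : Type*) [TopologicalSpace X] [MeasurableSpace X]

/-- The topology `τ_b` on the space of finite nonnegative Borel measures:
the weak topology induced by the pairings `μ ↦ ∫ g dμ`, `g ∈ C_b(X)`. -/
def taub : TopologicalSpace (FiniteMeasure X) :=
  ⨅ g : X →ᵇ ℝ,
    TopologicalSpace.induced (fun μ : FiniteMeasure X => ∫ x, g x ∂(μ : Measure X)) inferInstance

/-- The topology `τ_A` induced by the pairings with functions from `A ⊆ C_b(X)`. -/
def tauA (A : Set (X →ᵇ ℝ)) : TopologicalSpace (FiniteMeasure X) :=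
  ⨅ g ∈ A,
    TopologicalSpace.induced (fun μ : FiniteMeasure X => ∫ x, g x ∂(μ : Measure X)) inferInstance

variable {X}

/-- A closed linear sublattice of `C_b(X)`. -/
structure IsClosedSublattice (A : Set (X →ᵇ ℝ)) : Prop where
  isClosed : IsClosed A
  zero_mem : (0 : X →ᵇ ℝ) ∈ A
  add_mem : ∀ ⦃f g : X →ᵇ ℝ⦄, f ∈ A → g ∈ A → f + g ∈ A
  smul_mem : ∀ (c : ℝ) ⦃f : X →ᵇ ℝ⦄, f ∈ A → c • f ∈ A
  sup_mem : ∀ ⦃f g h : X →ᵇ ℝ⦄, f ∈ A → g ∈ A → (∀ x, h x = max (f x) (g x)) → h ∈ A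
  inf_mem : ∀ ⦃f g h : X →ᵇ ℝ⦄, f ∈ A → g ∈ A → (∀ x, h x = min (f x) (g x)) → h ∈ A

/-- An acceptable subspace of `C_b(X)`: a closed linear sublattice satisfying
the separation property (A2). -/
structure IsAcceptable (A : Set (X →ᵇ ℝ)) extends IsClosedSublattice A : Prop where
  sep : ∀ F : Set X, IsClosed F → ∀ x ∉ F, ∃ g ∈ A,
    (∀ y, 0 ≤ g y) ∧ (∀ y, g y ≤ 1) ∧ g x = 1 ∧ ∀ y ∈ F, g y = 0

/-- A lower semicontinuous `ρ : X → [0,∞]` is admissible for `E` if `∫ ρ dμ ≥ 1` for all `μ ∈ E`. -/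
def AdmissibleFun (ρ : X → ℝ≥0∞) (E : Set (FiniteMeasure X)) : Prop :=
  LowerSemicontinuous ρ ∧ ∀ μ ∈ E, 1 ≤ ∫⁻ x, ρ x ∂(μ : Measure X)

/-- The `M_p` modulus of a family of measures. -/
def Mmod (p : ℝ) (m : Measure X) (E : Set (FiniteMeasure X)) : ℝ≥0∞ :=
  ⨅ (ρ : X → ℝ≥0∞) (_ : AdmissibleFun ρ E), ∫⁻ x, ρ x ^ p ∂m

/-- The continuous modulus `M_{p,c}^A`, with test functions nonnegative elements of `A`. -/
def McMod (p : ℝ) (A : Set (X →ᵇ ℝ)) (m : Measure X) (E : Set (FiniteMeasure X)) : ℝ≥0∞ :=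
  ⨅ (g : X →ᵇ ℝ) (_ : g ∈ A ∧ (∀ x, 0 ≤ g x) ∧
      ∀ μ ∈ E, 1 ≤ ∫⁻ x, ENNReal.ofReal (g x) ∂(μ : Measure X)),
    ∫⁻ x, ENNReal.ofReal (g x) ^ p ∂m

/-- A sequence of lower semicontinuous functions `ρ_j : X → [0,∞]` is an admissible sequence
for `E` if `liminf_j ∫ ρ_j dμ ≥ 1` for all `μ ∈ E`. -/
def AdmissibleSeq (ρ : ℕ → X → ℝ≥0∞) (E : Set (FiniteMeasure X)) : Prop :=
  (∀ j, LowerSemicontinuous (ρ j)) ∧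
    ∀ μ ∈ E, 1 ≤ Filter.liminf (fun j => ∫⁻ x, ρ j x ∂(μ : Measure X)) Filter.atTop

/-- The approximation modulus `AM_p` of a family of measures. -/
def AMmod (p : ℝ) (m : Measure X) (E : Set (FiniteMeasure X)) : ℝ≥0∞ :=
  ⨅ (ρ : ℕ → X → ℝ≥0∞) (_ : AdmissibleSeq ρ E),
    Filter.liminf (fun j => ∫⁻ x, ρ j x ^ p ∂m) Filter.atTop

/-- The continuous approximation modulus `AM_{p,c}^A`. -/
def AMcMod (p : ℝ) (A : Set (X →ᵇ ℝ)) (m : Measure X) (E : Set (FiniteMeasure X)) : ℝ≥0∞ :=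
  ⨅ (g : ℕ → X →ᵇ ℝ) (_ : (∀ j, g j ∈ A ∧ ∀ x, 0 ≤ g j x) ∧
      ∀ μ ∈ E, 1 ≤ Filter.liminf
        (fun j => ∫⁻ x, ENNReal.ofReal (g j x) ∂(μ : Measure X)) Filter.atTop),
    Filter.liminf (fun j => ∫⁻ x, ENNReal.ofReal (g j x) ^ p ∂m) Filter.atTop

/-- The `L^q(m)`-norm of a function `f : X → [0,∞]`. -/
def lqNorm (q : ℝ≥0∞) (m : Measure X) (f : X → ℝ≥0∞) : ℝ≥0∞ :=
  if q = ∞ then essSup f m else (∫⁻ x, f x ^ q.toReal ∂m) ^ (1 / q.toReal)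

variable (X) in
/-- The `p`-content (depending on `p` only through the conjugate exponent `q`):
the supremum of the outer measures `η*(E)` over all plans `η` — finite Borel measures on
`(M^+(X), τ_b)` — whose barycenter `η^#` is absolutely continuous w.r.t. `m` with density
of `L^q(m)`-norm at most `1`. -/
def Ct (q : ℝ≥0∞) (m : Measure X) (E : Set (FiniteMeasure X)) : ℝ≥0∞ :=
  ⨆ (η : @Measure (FiniteMeasure X) (@borel (FiniteMeasure X) (taub X)))
    (_ : η Set.univ < ∞ ∧ ∃ f : X → ℝ≥0∞, Measurable f ∧
      (∀ B : Set X, MeasurableSet B → (∫⁻ μ, (μ : Measure X) B ∂η) = ∫⁻ x in B, f x ∂m) ∧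
      lqNorm q m f ≤ 1),
    η E



/-! ### Auxiliary material for stmt15 -/

open Set in
/-- `m|_{[0,r]}` as a finite measure. -/
def rmeas (r : ℝ) : FiniteMeasure ℝ :=
  ⟨volume.restrict (Set.Icc 0 r), ⟨by
    rw [Measure.restrict_apply_univ, Real.volume_Icc]; exact ENNReal.ofReal_lt_top⟩⟩

lemma rmeas_coe (r : ℝ) : (rmeas r : Measure ℝ) = volume.restrict (Set.Icc 0 r) := rfl

lemma gamma_eq (S : Set ℝ) :
    {μ : FiniteMeasure ℝ | ∃ r ∈ S, (μ : Measure ℝ) = volume.restrict (Set.Icc 0 r)} =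
      rmeas '' S := by
  ext μ
  constructor
  · rintro ⟨r, hr, h⟩
    exact ⟨r, hr, (FiniteMeasure.toMeasure_injective h.symm)⟩
  · rintro ⟨r, hr, h⟩
    exact ⟨r, hr, by rw [← h]; rfl⟩

lemma continuous_integral_rmeas (g : ℝ →ᵇ ℝ) :
    Continuous (fun r : ℝ => ∫ x, g x ∂(rmeas r : Measure ℝ)) := by
  have key : (fun r : ℝ => ∫ x, g x ∂(rmeas r : Measure ℝ))
      = fun r => ∫ t in (0:ℝ)..(max r 0), g t := by
    funext r
    rcases le_or_gt 0 r with h | h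
    · rw [max_eq_left h, rmeas_coe, intervalIntegral.integral_of_le h]
      exact MeasureTheory.integral_Icc_eq_integral_Ioc
    · rw [max_eq_right h.le, rmeas_coe, Set.Icc_eq_empty (by linarith), Measure.restrict_empty,
        intervalIntegral.integral_same, integral_zero_measure]
  rw [key]
  exact (intervalIntegral.continuous_primitive
    (fun a b => g.continuous.intervalIntegrable a b) 0).comp
    (continuous_id.max continuous_const)

lemma continuous_rmeas : Continuous[inferInstance, taub ℝ] rmeas := by
  rw [taub, continuous_iInf_rng]
  intro g
  rw [continuous_induced_rng]
  exact continuous_integral_rmeas g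

lemma isCompact_rmeas_image {s : Set ℝ} (hs : IsCompact s) :
    @IsCompact _ (taub ℝ) (rmeas '' s) :=
  @IsCompact.image _ _ _ (taub ℝ) _ _ hs continuous_rmeas

lemma taub_eq_induced :
    taub ℝ = TopologicalSpace.induced
      (fun μ : FiniteMeasure ℝ => fun g : ℝ →ᵇ ℝ => ∫ x, g x ∂(μ : Measure ℝ))
      inferInstance := by
  rw [taub]
  rw [Pi.topologicalSpace, induced_iInf]
  congr 1
  funext g
  rw [induced_compose]
  rfl

lemma t2_taub : @T2Space (FiniteMeasure ℝ) (taub ℝ) := by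
  letI := taub ℝ
  have hinj : Function.Injective
      (fun μ : FiniteMeasure ℝ => fun g : ℝ →ᵇ ℝ => ∫ x, g x ∂(μ : Measure ℝ)) := by
    intro μ ν h
    apply FiniteMeasure.ext_of_forall_lintegral_eq
    intro f
    have iso : Isometry ((↑) : ℝ≥0 → ℝ) := fun _ _ => rfl
    have lip : LipschitzWith 1 ((↑) : ℝ≥0 → ℝ) := iso.lipschitz
    have hg := congrFun h (BoundedContinuousFunction.comp _ lip f)
    simp only at hg
    have h1 := BoundedContinuousFunction.toReal_lintegral_coe_eq_integral f (μ : Measure ℝ)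
    have h2 := BoundedContinuousFunction.toReal_lintegral_coe_eq_integral f (ν : Measure ℝ)
    have e1 : (∫ x, (BoundedContinuousFunction.comp _ lip f) x ∂(μ : Measure ℝ))
        = ∫ x, (f x : ℝ) ∂(μ : Measure ℝ) := rfl
    have e2 : (∫ x, (BoundedContinuousFunction.comp _ lip f) x ∂(ν : Measure ℝ))
        = ∫ x, (f x : ℝ) ∂(ν : Measure ℝ) := rfl
    rw [e1, e2, ← h1, ← h2] at hg
    exact (ENNReal.toReal_eq_toReal_iff'
      (BoundedContinuousFunction.lintegral_lt_top_of_nnreal _ f).ne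
      (BoundedContinuousFunction.lintegral_lt_top_of_nnreal _ f).ne).mp hg
  exact (IsEmbedding.mk ⟨taub_eq_induced⟩ hinj).t2Space

lemma lint_ind_volume (a : ℝ) (c : ℝ≥0∞) :
    ∫⁻ x, (Set.Ioo (0:ℝ) a).indicator (fun _ => c) x ∂(volume : Measure ℝ)
      = c * ENNReal.ofReal a := by
  rw [lintegral_indicator measurableSet_Ioo, setLIntegral_const, Real.volume_Ioo, sub_zero]

lemma lint_ind_rmeas {a r : ℝ} (c : ℝ≥0∞) (har : a ≤ r) :
    ∫⁻ x, (Set.Ioo (0:ℝ) a).indicator (fun _ => c) x ∂(volume.restrict (Set.Icc 0 r))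
      = c * ENNReal.ofReal a := by
  rw [lintegral_indicator measurableSet_Ioo, setLIntegral_const,
    Measure.restrict_apply measurableSet_Ioo,
    Set.inter_eq_left.mpr (Set.Ioo_subset_Icc_self.trans (Set.Icc_subset_Icc_right har)),
    Real.volume_Ioo, sub_zero]

lemma two_pow_mul (k : ℕ) : (2:ℝ≥0∞) ^ k * ENNReal.ofReal ((2:ℝ)⁻¹ ^ k) = 1 := by
  rw [ENNReal.ofReal_pow (by norm_num), ← mul_pow,
    ENNReal.ofReal_inv_of_pos (by norm_num), ENNReal.ofReal_ofNat,
    ENNReal.mul_inv_cancel (by norm_num) (by norm_num), one_pow]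

/-- the canonical admissible function at scale `2⁻¹ ^ k` -/
def rhoK (k : ℕ) : ℝ → ℝ≥0∞ :=
  (Set.Ioo (0:ℝ) ((2:ℝ)⁻¹ ^ k)).indicator (fun _ => (2:ℝ≥0∞) ^ k)

lemma rhoK_lsc (k : ℕ) : LowerSemicontinuous (rhoK k) :=
  IsOpen.lowerSemicontinuous_indicator isOpen_Ioo zero_le

lemma rhoK_lint_volume (k : ℕ) : ∫⁻ x, rhoK k x ∂(volume : Measure ℝ) = 1 := by
  rw [rhoK, lint_ind_volume, two_pow_mul]

lemma rhoK_lint_rmeas {k : ℕ} {r : ℝ} (hr : (2:ℝ)⁻¹ ^ k ≤ r) :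
    ∫⁻ x, rhoK k x ∂(volume.restrict (Set.Icc 0 r)) = 1 := by
  rw [rhoK, lint_ind_rmeas _ hr, two_pow_mul]

lemma Mmod_Gk_le_one (k : ℕ) :
    Mmod 1 (volume : Measure ℝ) (rmeas '' Set.Icc ((2:ℝ)⁻¹ ^ k) 1) ≤ 1 := by
  have hadm : AdmissibleFun (rhoK k) (rmeas '' Set.Icc ((2:ℝ)⁻¹ ^ k) 1) := by
    refine ⟨rhoK_lsc k, ?_⟩
    rintro μ ⟨r, hr, rfl⟩
    rw [rmeas_coe, rhoK_lint_rmeas hr.1]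
  refine iInf_le_of_le (rhoK k) (iInf_le_of_le hadm ?_)
  simp only [ENNReal.rpow_one]
  exact (rhoK_lint_volume k).le

lemma one_le_Mmod {E : Set (FiniteMeasure ℝ)} (hE : rmeas 1 ∈ E) :
    1 ≤ Mmod 1 (volume : Measure ℝ) E := by
  refine le_iInf₂ fun ρ hadm => ?_
  calc (1:ℝ≥0∞) ≤ ∫⁻ x, ρ x ∂(rmeas 1 : Measure ℝ) := hadm.2 _ hE
    _ ≤ ∫⁻ x, ρ x ∂(volume : Measure ℝ) := by
        rw [rmeas_coe]; exact setLIntegral_le_lintegral _ _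
    _ = ∫⁻ x, ρ x ^ (1:ℝ) ∂(volume : Measure ℝ) := by simp [ENNReal.rpow_one]

lemma AMmod_G_le_one :
    AMmod 1 (volume : Measure ℝ) (rmeas '' Set.Ioc 0 1) ≤ 1 := by
  have hadm : AdmissibleSeq (fun j => rhoK j) (rmeas '' Set.Ioc 0 1) := by
    refine ⟨fun j => rhoK_lsc j, ?_⟩
    rintro μ ⟨r, hr, rfl⟩
    have hev : ∀ᶠ j in atTop, (1:ℝ≥0∞) ≤ ∫⁻ x, rhoK j x ∂(rmeas r : Measure ℝ) := by
      have ht : Tendsto (fun j : ℕ => (2:ℝ)⁻¹ ^ j) atTop (𝓝 0) :=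
        tendsto_pow_atTop_nhds_zero_of_lt_one (by norm_num) (by norm_num)
      filter_upwards [ht.eventually_le_const hr.1] with j hj
      rw [rmeas_coe, rhoK_lint_rmeas hj]
    exact le_liminf_of_le (by isBoundedDefault) hev
  refine iInf_le_of_le (fun j => rhoK j) (iInf_le_of_le hadm ?_)
  simp only [ENNReal.rpow_one, rhoK_lint_volume, liminf_const]
  exact le_rfl

lemma Mmod_G_top :
    Mmod 1 (volume : Measure ℝ) (rmeas '' Set.Ioc 0 1) = ∞ := by
  rw [eq_top_iff]
  refine le_iInf₂ fun ρ hadm => le_of_eq ?_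
  simp only [ENNReal.rpow_one]
  by_contra hfin
  have hfin' : ∫⁻ x, ρ x ∂(volume : Measure ℝ) ≠ ∞ := fun h => hfin h.symm
  set ν : Measure ℝ := volume.withDensity ρ with hν
  have hν_apply : ∀ s : Set ℝ, MeasurableSet s → ν s = ∫⁻ x in s, ρ x ∂volume :=
    fun s hs => withDensity_apply ρ hs
  have h1 : ∀ k : ℕ, 1 ≤ ν (Set.Icc 0 ((2:ℝ)⁻¹ ^ k)) := by
    intro k
    have hmem : rmeas ((2:ℝ)⁻¹ ^ k) ∈ rmeas '' Set.Ioc 0 1 :=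
      ⟨_, ⟨by positivity, pow_le_one₀ (by norm_num) (by norm_num)⟩, rfl⟩
    have := hadm.2 _ hmem
    rwa [rmeas_coe, ← hν_apply _ measurableSet_Icc] at this
  have hanti : Antitone fun k : ℕ => Set.Icc (0:ℝ) ((2:ℝ)⁻¹ ^ k) := fun m n h =>
    Set.Icc_subset_Icc_right (pow_le_pow_of_le_one (by norm_num) (by norm_num) h)
  have hfin2 : ∃ k : ℕ, ν (Set.Icc (0:ℝ) ((2:ℝ)⁻¹ ^ k)) ≠ ∞ := by
    refine ⟨0, ?_⟩
    rw [hν_apply _ measurableSet_Icc]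
    exact ((setLIntegral_le_lintegral _ _).trans_lt hfin'.lt_top).ne
  have htend := tendsto_measure_iInter_atTop (μ := ν)
    (fun k => measurableSet_Icc.nullMeasurableSet) hanti hfin2
  have hiInter : ⋂ k : ℕ, Set.Icc (0:ℝ) ((2:ℝ)⁻¹ ^ k) = {0} := by
    apply Set.Subset.antisymm
    · intro x hx
      simp only [Set.mem_iInter, Set.mem_Icc] at hx
      have hx0 : 0 ≤ x := (hx 0).1
      have hxle : x ≤ 0 := by
        have ht : Tendsto (fun j : ℕ => (2:ℝ)⁻¹ ^ j) atTop (𝓝 0) :=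
          tendsto_pow_atTop_nhds_zero_of_lt_one (by norm_num) (by norm_num)
        exact ge_of_tendsto ht (Eventually.of_forall fun k => (hx k).2)
      simp [le_antisymm hxle hx0]
    · intro x hx
      simp only [Set.mem_singleton_iff] at hx
      subst hx
      simp only [Set.mem_iInter, Set.mem_Icc]
      exact fun k => ⟨le_rfl, by positivity⟩
  rw [hiInter] at htend
  have hν0 : ν ({0} : Set ℝ) = 0 := by
    rw [hν_apply _ (measurableSet_singleton 0)]
    exact setLIntegral_measure_zero _ _ Real.volume_singleton
  rw [hν0] at htend
  have : (1:ℝ≥0∞) ≤ 0 := ge_of_tendsto htend (Eventually.of_forall fun k => h1 k)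
  simp at this

lemma T_rmeas {r : ℝ} (hr : 0 ≤ r) :
    ∫ x, (1 : ℝ →ᵇ ℝ) x ∂(rmeas r : Measure ℝ) = r := by
  rw [rmeas_coe]
  simp [integral_const, Real.volume_Icc, ENNReal.toReal_ofReal hr, hr]

lemma Mmod_compact_le_one {K : Set (FiniteMeasure ℝ)}
    (hK : @IsCompact _ (taub ℝ) K) (hsub : K ⊆ rmeas '' Set.Ioc 0 1) :
    Mmod 1 (volume : Measure ℝ) K ≤ 1 := by
  rcases K.eq_empty_or_nonempty with rfl | hne
  · have hadm : AdmissibleFun (fun _ : ℝ => (0:ℝ≥0∞)) (∅ : Set (FiniteMeasure ℝ)) :=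
      ⟨lowerSemicontinuous_const, by simp⟩
    refine iInf_le_of_le _ (iInf_le_of_le hadm ?_)
    simp
  · letI := taub ℝ
    have hTcont : Continuous (fun μ : FiniteMeasure ℝ => ∫ x, (1 : ℝ →ᵇ ℝ) x ∂(μ : Measure ℝ)) := by
      have h : (taub ℝ) = ⨅ g : ℝ →ᵇ ℝ, TopologicalSpace.induced
          (fun μ : FiniteMeasure ℝ => ∫ x, g x ∂(μ : Measure ℝ)) inferInstance := rfl
      rw [continuous_iff_le_induced]
      show taub ℝ ≤ _
      rw [h]
      exact iInf_le_of_le (1 : ℝ →ᵇ ℝ) le_rfl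
    obtain ⟨μ0, hμ0K, hmin⟩ := hK.exists_isMinOn hne hTcont.continuousOn
    obtain ⟨r0, hr0, hr0eq⟩ := hsub hμ0K
    have hT0 : ∫ x, (1 : ℝ →ᵇ ℝ) x ∂(μ0 : Measure ℝ) = r0 := by
      rw [← hr0eq]; exact T_rmeas hr0.1.le
    set ρ : ℝ → ℝ≥0∞ := (Set.Ioo (0:ℝ) r0).indicator (fun _ => (ENNReal.ofReal r0)⁻¹) with hρ
    have hcancel : (ENNReal.ofReal r0)⁻¹ * ENNReal.ofReal r0 = 1 :=
      ENNReal.inv_mul_cancel (ENNReal.ofReal_pos.mpr hr0.1).ne' ENNReal.ofReal_ne_top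
    have hadm : AdmissibleFun ρ K := by
      refine ⟨IsOpen.lowerSemicontinuous_indicator isOpen_Ioo zero_le, ?_⟩
      intro μ hμ
      obtain ⟨r, hr, hreq⟩ := hsub hμ
      have hrr : r0 ≤ r := by
        have := hmin hμ
        simp only [Set.mem_setOf_eq] at this
        rw [hT0] at this
        rwa [← hreq, T_rmeas hr.1.le] at this
      rw [← hreq, rmeas_coe, lint_ind_rmeas _ hrr, hcancel]
    refine iInf_le_of_le ρ (iInf_le_of_le hadm ?_)
    simp only [ENNReal.rpow_one, hρ]
    rw [lint_ind_volume, hcancel]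

lemma union_Icc_eq : (⋃ k : ℕ, Set.Icc ((2:ℝ)⁻¹ ^ k) 1) = Set.Ioc (0:ℝ) 1 := by
  apply Set.Subset.antisymm
  · exact Set.iUnion_subset fun k x hx => ⟨lt_of_lt_of_le (by positivity) hx.1, hx.2⟩
  · intro x hx
    obtain ⟨n, hn⟩ := exists_pow_lt_of_lt_one hx.1 (by norm_num : (2:ℝ)⁻¹ < 1)
    exact Set.mem_iUnion.mpr ⟨n, hn.le, hx.2⟩

theorem stmt15 :
    (∀ k : ℕ, @IsCompact _ (taub ℝ)
      {μ : FiniteMeasure ℝ | ∃ r ∈ Set.Icc ((2:ℝ)⁻¹ ^ k) 1,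
        (μ : Measure ℝ) = volume.restrict (Set.Icc 0 r)}) ∧
    (⋃ k : ℕ, {μ : FiniteMeasure ℝ | ∃ r ∈ Set.Icc ((2:ℝ)⁻¹ ^ k) 1,
        (μ : Measure ℝ) = volume.restrict (Set.Icc 0 r)}) =
      {μ : FiniteMeasure ℝ | ∃ r ∈ Set.Ioc (0:ℝ) 1,
        (μ : Measure ℝ) = volume.restrict (Set.Icc 0 r)} ∧
    AMmod 1 (volume : Measure ℝ)
        {μ : FiniteMeasure ℝ | ∃ r ∈ Set.Ioc (0:ℝ) 1,
          (μ : Measure ℝ) = volume.restrict (Set.Icc 0 r)} ≤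
      (⨆ k : ℕ, Mmod 1 (volume : Measure ℝ)
        {μ : FiniteMeasure ℝ | ∃ r ∈ Set.Icc ((2:ℝ)⁻¹ ^ k) 1,
          (μ : Measure ℝ) = volume.restrict (Set.Icc 0 r)}) ∧
    (⨆ k : ℕ, Mmod 1 (volume : Measure ℝ)
        {μ : FiniteMeasure ℝ | ∃ r ∈ Set.Icc ((2:ℝ)⁻¹ ^ k) 1,
          (μ : Measure ℝ) = volume.restrict (Set.Icc 0 r)}) ≤ 1 ∧
    Mmod 1 (volume : Measure ℝ)
        {μ : FiniteMeasure ℝ | ∃ r ∈ Set.Ioc (0:ℝ) 1,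
          (μ : Measure ℝ) = volume.restrict (Set.Icc 0 r)} = ∞ ∧
    AMmod 1 (volume : Measure ℝ)
        {μ : FiniteMeasure ℝ | ∃ r ∈ Set.Ioc (0:ℝ) 1,
          (μ : Measure ℝ) = volume.restrict (Set.Icc 0 r)} <
      Mmod 1 (volume : Measure ℝ)
        {μ : FiniteMeasure ℝ | ∃ r ∈ Set.Ioc (0:ℝ) 1,
          (μ : Measure ℝ) = volume.restrict (Set.Icc 0 r)} ∧
    (∃ C : ℕ → Set (FiniteMeasure ℝ), (∀ n, @IsClosed _ (taub ℝ) (C n)) ∧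
      {μ : FiniteMeasure ℝ | ∃ r ∈ Set.Ioc (0:ℝ) 1,
        (μ : Measure ℝ) = volume.restrict (Set.Icc 0 r)} = ⋃ n, C n) ∧
    (⨆ (K : Set (FiniteMeasure ℝ)) (_ : @IsCompact _ (taub ℝ) K ∧
        K ⊆ {μ : FiniteMeasure ℝ | ∃ r ∈ Set.Ioc (0:ℝ) 1,
          (μ : Measure ℝ) = volume.restrict (Set.Icc 0 r)}),
      Mmod 1 (volume : Measure ℝ) K) <
      Mmod 1 (volume : Measure ℝ)
        {μ : FiniteMeasure ℝ | ∃ r ∈ Set.Ioc (0:ℝ) 1,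
          (μ : Measure ℝ) = volume.restrict (Set.Icc 0 r)} := by
  have hG0 : ∀ k : ℕ, {μ : FiniteMeasure ℝ | ∃ r ∈ Set.Icc ((2:ℝ)⁻¹ ^ k) 1,
      (μ : Measure ℝ) = volume.restrict (Set.Icc 0 r)} = rmeas '' Set.Icc ((2:ℝ)⁻¹ ^ k) 1 :=
    fun k => gamma_eq _
  have hG : {μ : FiniteMeasure ℝ | ∃ r ∈ Set.Ioc (0:ℝ) 1,
      (μ : Measure ℝ) = volume.restrict (Set.Icc 0 r)} = rmeas '' Set.Ioc 0 1 := gamma_eq _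
  have hUnion : (⋃ k : ℕ, rmeas '' Set.Icc ((2:ℝ)⁻¹ ^ k) 1) = rmeas '' Set.Ioc 0 1 := by
    rw [← Set.image_iUnion, union_Icc_eq]
  refine ⟨?_, ?_, ?_, ?_, ?_, ?_, ?_, ?_⟩
  · intro k
    rw [hG0 k]
    exact isCompact_rmeas_image isCompact_Icc
  · calc (⋃ k : ℕ, {μ : FiniteMeasure ℝ | ∃ r ∈ Set.Icc ((2:ℝ)⁻¹ ^ k) 1,
        (μ : Measure ℝ) = volume.restrict (Set.Icc 0 r)})
        = ⋃ k : ℕ, rmeas '' Set.Icc ((2:ℝ)⁻¹ ^ k) 1 := by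
          exact Set.iUnion_congr hG0
      _ = rmeas '' Set.Ioc 0 1 := hUnion
      _ = _ := hG.symm
  · rw [hG]
    refine le_trans AMmod_G_le_one (le_trans ?_ (le_iSup _ 0))
    rw [hG0 0]
    exact one_le_Mmod ⟨1, by norm_num, rfl⟩
  · refine iSup_le fun k => ?_
    rw [hG0 k]
    exact Mmod_Gk_le_one k
  · rw [hG]
    exact Mmod_G_top
  · rw [hG]
    exact lt_of_le_of_lt AMmod_G_le_one (by rw [Mmod_G_top]; exact ENNReal.one_lt_top)
  · refine ⟨fun n => rmeas '' Set.Icc ((2:ℝ)⁻¹ ^ n) 1, fun n => ?_, ?_⟩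
    · letI := taub ℝ
      haveI := t2_taub
      exact (isCompact_rmeas_image isCompact_Icc).isClosed
    · rw [hG, ← hUnion]
  · rw [hG]
    refine lt_of_le_of_lt (iSup₂_le fun K hK => Mmod_compact_le_one hK.1 (hG ▸ hK.2)) ?_
    rw [Mmod_G_top]
    exact ENNReal.one_lt_top


end AMPaper

end
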